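/- For all φ₀, φ₁ with 0 < φ₀ < φ₁ < π/2, the map T_{C_r}(α) := 2T(α) + T₁(α, φ₀) − T₁(α, φ₁) is strictly increasing on (φ₁, π/2). -/

import Mathlib

open Real MeasureTheory intervalIntegral

/-- The time map `T(α) = ∫₀^α dx / √(cos 2x − cos 2α)`. -/
noncomputable def timeMapT (α : ℝ) : ℝ :=
  ∫ x in (0:ℝ)..α, 1 / Real.sqrt (Real.cos (2 * x) - Real.cos (2 * α))

/-- The time map `T₁(α, φ) = ∫₀^φ dx / √(cos 2x − cos 2α)`. -/
noncomputable def timeMapT1 (α φ : ℝ) : ℝ :=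
  ∫ x in (0:ℝ)..φ, 1 / Real.sqrt (Real.cos (2 * x) - Real.cos (2 * α))

/-- Concavity bound: `l * sin z ≤ sin (l * z)` for `l ∈ [0,1]`, `z ∈ [0,π]`. -/
lemma aux_sin_concave {l z : ℝ} (hl0 : 0 ≤ l) (hl1 : l ≤ 1) (hz0 : 0 ≤ z) (hzπ : z ≤ π) :
    l * Real.sin z ≤ Real.sin (l * z) := by
  have h := strictConcaveOn_sin_Icc.concaveOn.2 (Set.mem_Icc.2 ⟨le_rfl, Real.pi_pos.le⟩)
    (Set.mem_Icc.2 ⟨hz0, hzπ⟩) (sub_nonneg.2 hl1) hl0 (by ring)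
  simpa [Real.sin_zero] using h

lemma aux_cos_sub (x c : ℝ) :
    Real.cos (2 * x) - Real.cos (2 * c) = 2 * Real.sin (c + x) * Real.sin (c - x) := by
  rw [Real.cos_sub_cos]
  have e1 : (2 * x + 2 * c) / 2 = c + x := by ring
  have e2 : (2 * x - 2 * c) / 2 = -(c - x) := by ring
  rw [e1, e2, Real.sin_neg]
  ring

/-- Positivity of the denominator below the endpoint. -/
lemma aux_pos {c x : ℝ} (hx0 : 0 ≤ x) (hxc : x < c) (hc : c ≤ π / 2) :
    0 < Real.cos (2 * x) - Real.cos (2 * c) := by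
  have := Real.cos_lt_cos_of_nonneg_of_le_pi (x := 2 * x) (y := 2 * c)
    (by linarith) (by linarith [Real.pi_pos]) (by linarith)
  linarith

/-- Linear lower bound for the denominator. -/
lemma aux_lb {c x : ℝ} (hc0 : 0 < c) (hc : c < π / 2) (hx0 : 0 ≤ x) (hxc : x ≤ c) :
    Real.sin (2 * c) ^ 2 / (2 * c) * (c - x) ≤ Real.cos (2 * x) - Real.cos (2 * c) := by
  have hπ : 0 < π := Real.pi_pos
  have hs : 0 < Real.sin (2 * c) := Real.sin_pos_of_pos_of_lt_pi (by linarith) (by linarith)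
  have h1 : (c + x) / (2 * c) * Real.sin (2 * c) ≤ Real.sin (c + x) := by
    have := aux_sin_concave (l := (c + x) / (2 * c)) (z := 2 * c)
      (by positivity) (by rw [div_le_one (by positivity)]; linarith)
      (by linarith) (by linarith)
    have e : (c + x) / (2 * c) * (2 * c) = c + x := by field_simp
    rwa [e] at this
  have h2 : (c - x) / (2 * c) * Real.sin (2 * c) ≤ Real.sin (c - x) := by
    have := aux_sin_concave (l := (c - x) / (2 * c)) (z := 2 * c)
      (div_nonneg (by linarith) (by positivity)) (by rw [div_le_one (by positivity)]; linarith)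
      (by linarith) (by linarith)
    have e : (c - x) / (2 * c) * (2 * c) = c - x := by field_simp
    rwa [e] at this
  rw [aux_cos_sub]
  have hb1 : 0 ≤ (c + x) / (2 * c) * Real.sin (2 * c) := by positivity
  have hb2 : 0 ≤ (c - x) / (2 * c) * Real.sin (2 * c) :=
    mul_nonneg (div_nonneg (by linarith) (by positivity)) hs.le
  have key : (c + x) / (2 * c) * Real.sin (2 * c) * ((c - x) / (2 * c) * Real.sin (2 * c))
      ≤ Real.sin (c + x) * Real.sin (c - x) :=
    mul_le_mul h1 h2 hb2 (le_trans hb1 h1)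
  have e2 : (c + x) / (2 * c) * Real.sin (2 * c) * ((c - x) / (2 * c) * Real.sin (2 * c))
      = Real.sin (2 * c) ^ 2 * ((c + x) * (c - x)) / (2 * c) ^ 2 := by ring
  have hx' : Real.sin (2 * c) ^ 2 / (2 * c) * (c - x)
      ≤ 2 * (Real.sin (2 * c) ^ 2 * ((c + x) * (c - x)) / (2 * c) ^ 2) := by
    have hcx : 0 ≤ c - x := by linarith
    rw [show Real.sin (2*c)^2 / (2*c) * (c-x) = Real.sin (2*c)^2 * (c-x) / (2*c) from by ring,
      show 2 * (Real.sin (2*c)^2 * ((c+x)*(c-x)) / (2*c)^2)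
        = 2*(Real.sin (2*c)^2 * ((c+x)*(c-x))) / (2*c)^2 from by ring,
      div_le_div_iff₀ (by linarith) (by positivity)]
    nlinarith [mul_nonneg (mul_nonneg (sq_nonneg (Real.sin (2*c))) hcx)
      (mul_nonneg hx0 hc0.le)]
  linarith [key]

/-- Integrability of the singular integrand on `[0, c]`. -/
lemma aux_integrable {c : ℝ} (hc0 : 0 < c) (hc : c < π / 2) :
    IntervalIntegrable (fun x => 1 / Real.sqrt (Real.cos (2 * x) - Real.cos (2 * c)))
      volume 0 c := by
  have hπ := Real.pi_pos
  set M := Real.sin (2 * c) ^ 2 / (2 * c) with hM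
  have hs : 0 < Real.sin (2 * c) :=
    Real.sin_pos_of_pos_of_lt_pi (by linarith) (by linarith)
  have hMpos : 0 < M := by positivity
  have hbint : IntervalIntegrable (fun x => (Real.sqrt M)⁻¹ * (c - x) ^ (-(1/2) : ℝ))
      volume 0 c := by
    have h1 : IntervalIntegrable (fun x : ℝ => x ^ (-(1/2) : ℝ)) volume c 0 :=
      intervalIntegrable_rpow' (by norm_num)
    have h2 := h1.comp_sub_left c
    simp only [sub_self, sub_zero] at h2
    exact h2.const_mul _
  apply hbint.mono_fun'
  · have hm : Continuous fun x : ℝ => Real.sqrt (Real.cos (2 * x) - Real.cos (2 * c)) := by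
      fun_prop
    exact (measurable_const.div hm.measurable).aestronglyMeasurable
  · rw [Set.uIoc_of_le hc0.le]
    refine Filter.eventually_of_mem (MeasureTheory.self_mem_ae_restrict measurableSet_Ioc)
      fun x hx => ?_
    have hfnn : 0 ≤ 1 / Real.sqrt (Real.cos (2 * x) - Real.cos (2 * c)) := by positivity
    simp only []
    rw [Real.norm_of_nonneg hfnn]
    rcases eq_or_lt_of_le hx.2 with rfl | hxc
    · simp [Real.zero_rpow (by norm_num : (-(1/2) : ℝ) ≠ 0)]
    · have hcx : 0 < c - x := by linarith
      have hA : M * (c - x) ≤ Real.cos (2 * x) - Real.cos (2 * c) := by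
        have := aux_lb hc0 hc hx.1.le hx.2
        linarith [this]
      have hMc : 0 < M * (c - x) := mul_pos hMpos hcx
      have hrw : (c - x) ^ (-(1/2) : ℝ) = (Real.sqrt (c - x))⁻¹ := by
        rw [Real.rpow_neg hcx.le, ← Real.sqrt_eq_rpow]
      rw [hrw, ← mul_inv, ← Real.sqrt_mul hMpos.le, one_div]
      exact inv_anti₀ (Real.sqrt_pos.2 hMc) (Real.sqrt_le_sqrt hA)

/-- Integrability away from the singularity, by continuity. -/
lemma aux_contInt {c a b : ℝ} (h0a : 0 ≤ a) (hab : a ≤ b) (hbc : b < c) (hc : c ≤ π / 2) :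
    IntervalIntegrable (fun x => 1 / Real.sqrt (Real.cos (2 * x) - Real.cos (2 * c)))
      volume a b := by
  apply ContinuousOn.intervalIntegrable
  rw [Set.uIcc_of_le hab]
  apply ContinuousOn.div continuousOn_const
  · exact (Real.continuous_sqrt.comp (by continuity)).continuousOn
  · intro x hx
    exact ne_of_gt (Real.sqrt_pos.2 (aux_pos (h0a.trans hx.1) (lt_of_le_of_lt hx.2 hbc) hc))

/-- Pointwise comparison after rescaling. -/
lemma aux_pt {α β x : ℝ} (hα0 : 0 < α) (hαβ : α < β) (hβ : β < π / 2)
    (hx0 : 0 ≤ x) (hxα : x ≤ α) :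
    1 / Real.sqrt (Real.cos (2 * x) - Real.cos (2 * α)) ≤
      (β / α) * (1 / Real.sqrt (Real.cos (2 * (β / α * x)) - Real.cos (2 * β))) := by
  have hπ := Real.pi_pos
  have hβ0 : 0 < β := hα0.trans hαβ
  set y := β / α * x with hy
  have hy0 : 0 ≤ y := by positivity
  have hyβ : y ≤ β := by
    rw [hy]
    calc β / α * x ≤ β / α * α := by
          apply mul_le_mul_of_nonneg_left hxα (by positivity)
      _ = β := by field_simp
  rcases eq_or_lt_of_le hxα with rfl | hxα'
  · have hyb : y = β := by rw [hy]; field_simp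
    rw [hyb]
    simp
  · have hyβ' : y < β := by
      rw [hy]
      calc β / α * x < β / α * α := by
            apply mul_lt_mul_of_pos_left hxα' (by positivity)
        _ = β := by field_simp
    have hA : 0 < Real.cos (2 * x) - Real.cos (2 * α) := aux_pos hx0 hxα' (by linarith)
    have hB : 0 < Real.cos (2 * y) - Real.cos (2 * β) := aux_pos hy0 hyβ' hβ.le
    -- key quadratic estimate
    have e1 : α + x = α / β * (β + y) := by rw [hy]; field_simp
    have e2 : α - x = α / β * (β - y) := by rw [hy]; field_simp
    have hl0 : 0 ≤ α / β := by positivity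
    have hl1 : α / β ≤ 1 := by rw [div_le_one hβ0]; linarith
    have sb1 : 0 ≤ Real.sin (β + y) :=
      Real.sin_nonneg_of_nonneg_of_le_pi (by linarith) (by linarith)
    have sb2 : 0 ≤ Real.sin (β - y) :=
      Real.sin_nonneg_of_nonneg_of_le_pi (by linarith) (by linarith)
    have s1 : α / β * Real.sin (β + y) ≤ Real.sin (α + x) := by
      rw [e1]; exact aux_sin_concave hl0 hl1 (by linarith) (by linarith)
    have s2 : α / β * Real.sin (β - y) ≤ Real.sin (α - x) := by
      rw [e2]; exact aux_sin_concave hl0 hl1 (by linarith) (by linarith)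
    have hm : (α / β * Real.sin (β + y)) * (α / β * Real.sin (β - y)) ≤
        Real.sin (α + x) * Real.sin (α - x) :=
      mul_le_mul s1 s2 (mul_nonneg hl0 sb2) (le_trans (mul_nonneg hl0 sb1) s1)
    have he : (α / β * Real.sin (β + y)) * (α / β * Real.sin (β - y)) * β ^ 2
        = α ^ 2 * (Real.sin (β + y) * Real.sin (β - y)) := by
      field_simp
    have key : α ^ 2 * (Real.cos (2 * y) - Real.cos (2 * β)) ≤
        β ^ 2 * (Real.cos (2 * x) - Real.cos (2 * α)) := by
      rw [aux_cos_sub y β, aux_cos_sub x α]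
      nlinarith [mul_le_mul_of_nonneg_right hm (sq_nonneg β)]
    have hBle : Real.cos (2 * y) - Real.cos (2 * β) ≤
        (β / α) ^ 2 * (Real.cos (2 * x) - Real.cos (2 * α)) := by
      rw [div_pow, div_mul_eq_mul_div, le_div_iff₀ (by positivity)]
      linarith [key]
    have hsq : Real.sqrt (Real.cos (2 * y) - Real.cos (2 * β)) ≤
        (β / α) * Real.sqrt (Real.cos (2 * x) - Real.cos (2 * α)) := by
      have h := Real.sqrt_le_sqrt hBle
      rwa [Real.sqrt_mul (sq_nonneg _), Real.sqrt_sq (by positivity : (0:ℝ) ≤ β / α)] at h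
    rw [mul_one_div, div_le_div_iff₀ (Real.sqrt_pos.2 hA) (Real.sqrt_pos.2 hB), one_mul]
    exact hsq

/-- Monotonicity of the time map `T`. -/
lemma aux_T_mono {α β : ℝ} (hα0 : 0 < α) (hαβ : α < β) (hβ : β < π / 2) :
    timeMapT α ≤ timeMapT β := by
  have hβ0 : 0 < β := hα0.trans hαβ
  have hk0 : 0 < β / α := by positivity
  have hint_α := aux_integrable hα0 (hαβ.trans hβ)
  have hint_β := aux_integrable hβ0 hβ
  have hcomp0 := hint_β.comp_mul_left (c := β / α)
  have hze : (0 : ℝ) / (β / α) = 0 := by simp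
  have hαe : β / (β / α) = α := by field_simp
  rw [hze, hαe] at hcomp0
  have hcomp := hcomp0.const_mul (β / α)
  have hmono := intervalIntegral.integral_mono_on (μ := volume) hα0.le hint_α hcomp
    (fun x hx => aux_pt hα0 hαβ hβ hx.1 hx.2)
  have hchg : (∫ x in (0:ℝ)..α,
      (β / α) * (1 / Real.sqrt (Real.cos (2 * (β / α * x)) - Real.cos (2 * β))))
      = timeMapT β := by
    rw [intervalIntegral.integral_const_mul,
      intervalIntegral.integral_comp_mul_left
        (fun u => 1 / Real.sqrt (Real.cos (2 * u) - Real.cos (2 * β))) (ne_of_gt hk0)]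
    have h1 : β / α * 0 = 0 := by ring
    have h2 : β / α * α = β := by field_simp
    rw [h1, h2, smul_eq_mul, ← mul_assoc, mul_inv_cancel₀ (ne_of_gt hk0), one_mul]
    rfl
  calc timeMapT α ≤ _ := hmono
    _ = timeMapT β := hchg

theorem timeMapTCr_strictMono (φ₀ φ₁ : ℝ) (h₀ : 0 < φ₀) (h₀₁ : φ₀ < φ₁)
    (h₁ : φ₁ < π / 2) :
    StrictMonoOn (fun α => 2 * timeMapT α + timeMapT1 α φ₀ - timeMapT1 α φ₁)
      (Set.Ioo φ₁ (π / 2)) := by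
  intro α hα β hβ hαβ
  have hπ := Real.pi_pos
  have hα0 : 0 < α := h₀.trans (h₀₁.trans hα.1)
  have hβ0 : 0 < β := hα0.trans hαβ
  -- split T₁ at φ₀
  have hsplit : ∀ c : ℝ, φ₁ < c → c < π / 2 →
      timeMapT1 c φ₁ = timeMapT1 c φ₀ +
        ∫ x in φ₀..φ₁, 1 / Real.sqrt (Real.cos (2 * x) - Real.cos (2 * c)) := by
    intro c hc1 hc2
    exact (intervalIntegral.integral_add_adjacent_intervals
      (aux_contInt le_rfl h₀.le (h₀₁.trans hc1) hc2.le)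
      (aux_contInt h₀.le h₀₁.le hc1 hc2.le)).symm
  have hsα := hsplit α hα.1 hα.2
  have hsβ := hsplit β (hα.1.trans hαβ) hβ.2
  -- strict inequality of the middle integrals
  have hlt : ∫ x in φ₀..φ₁, 1 / Real.sqrt (Real.cos (2 * x) - Real.cos (2 * β)) <
      ∫ x in φ₀..φ₁, 1 / Real.sqrt (Real.cos (2 * x) - Real.cos (2 * α)) := by
    have hiα := aux_contInt h₀.le h₀₁.le hα.1 hα.2.le
    have hiβ := aux_contInt h₀.le h₀₁.le (hα.1.trans hαβ) hβ.2.le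
    have hpos := intervalIntegral.intervalIntegral_pos_of_pos_on
      (f := fun x => 1 / Real.sqrt (Real.cos (2 * x) - Real.cos (2 * α)) -
        1 / Real.sqrt (Real.cos (2 * x) - Real.cos (2 * β)))
      (hiα.sub hiβ) ?_ h₀₁
    · rw [intervalIntegral.integral_sub hiα hiβ] at hpos
      linarith
    · intro x hx
      have hx0 : 0 ≤ x := (h₀.trans hx.1).le
      have hAα : 0 < Real.cos (2 * x) - Real.cos (2 * α) :=
        aux_pos hx0 (hx.2.trans hα.1) hα.2.le
      have hcc : Real.cos (2 * β) < Real.cos (2 * α) := by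
        apply Real.cos_lt_cos_of_nonneg_of_le_pi (by linarith) (by linarith [hβ.2])
        linarith
      have hAβ : Real.cos (2 * x) - Real.cos (2 * α) <
          Real.cos (2 * x) - Real.cos (2 * β) := by linarith
      have hsqlt : Real.sqrt (Real.cos (2 * x) - Real.cos (2 * α)) <
          Real.sqrt (Real.cos (2 * x) - Real.cos (2 * β)) :=
        Real.sqrt_lt_sqrt hAα.le hAβ
      have := one_div_lt_one_div_of_lt (Real.sqrt_pos.2 hAα) hsqlt
      linarith
  have hT := aux_T_mono hα0 hαβ hβ.2
  simp only []
  rw [hsα, hsβ]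
  linarith
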